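/- Key scalar comparison between diffusion and consensus modes (chain of inequalities in the proof of Theorem 4): Let 0 < D < 1, λ > 0, and μ > 0 with 2λμ > 1. Then limsup_{i→∞} i² · i^{−2λμ} ∑_{j=1}^{i−1} D^{2(i−j)} j^{2λμ−2} ≤ 1/log(D^{−2}) ≤ liminf_{i→∞} i² · i^{−2λμ/D} ∑_{j=1}^{i−1} D^{2(i−j−1)} j^{2λμ/D − 2}. In particular, each term of the consensus-mode sum asymptotically dominates (up to order i^{−2}) the corresponding diffusion-mode term. -/

import Mathlib

open Filter Topology

/-- **Key scalar comparison between diffusion and consensus modes** (chain of inequalities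
in the proof of Theorem 4): for `0 < D < 1`, `λ > 0`, `μ > 0` with `2λμ > 1`,
`limsup i² · i^{−2λμ} ∑_{j=1}^{i−1} D^{2(i−j)} j^{2λμ−2} ≤ 1/log(D⁻²)`
and `1/log(D⁻²) ≤ liminf i² · i^{−2λμ/D} ∑_{j=1}^{i−1} D^{2(i−j−1)} j^{2λμ/D−2}`. -/
lemma aux_tendsto (x : ℝ) (hx0 : 0 < x) (hx1 : x < 1) (q : ℝ) (c : ℕ) :
    Tendsto (fun i : ℕ => ∑ j ∈ Finset.Icc 1 (i - 1),
      x ^ (i - j - 1 + c) * ((j : ℝ) / i) ^ q) atTop (𝓝 (x ^ c / (1 - x))) := by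
  set N : ℕ := ⌈|q|⌉₊ with hN
  set F : ℕ → ℕ → ℝ := fun i k =>
    if k + 1 < i then x ^ (k + c) * (((i - 1 - k : ℕ) : ℝ) / i) ^ q else 0 with hF
  have hsum_eq : ∀ i : ℕ, (∑ j ∈ Finset.Icc 1 (i - 1),
      x ^ (i - j - 1 + c) * ((j : ℝ) / i) ^ q) = ∑' k, F i k := by
    intro i
    rw [tsum_eq_sum (s := Finset.range (i - 1)) (by
      intro k hk
      simp only [Finset.mem_range, not_lt] at hk
      simp only [hF]
      rw [if_neg (by omega)])]
    have hIcc : Finset.Icc 1 (i - 1) = Finset.Ico 1 i := by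
      ext a; simp only [Finset.mem_Icc, Finset.mem_Ico]; omega
    rw [hIcc, Finset.sum_Ico_eq_sum_range]
    rw [← Finset.sum_range_reflect
      (fun k => x ^ (i - (1 + k) - 1 + c) * (((1 + k : ℕ) : ℝ) / i) ^ q) (i - 1)]
    refine Finset.sum_congr rfl fun k hk => ?_
    simp only [Finset.mem_range] at hk
    simp only [hF]
    rw [if_pos (by omega)]
    rw [show 1 + (i - 1 - 1 - k) = i - 1 - k from by omega,
      show i - (i - 1 - k) - 1 + c = k + c from by omega]
  have hbound_summable : Summable (fun k : ℕ => x ^ (k + c) * ((k : ℝ) + 2) ^ N) := by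
    have h1 : Summable (fun k : ℕ => (k : ℝ) ^ N * x ^ k) :=
      summable_pow_mul_geometric_of_norm_lt_one N
        (by rwa [Real.norm_eq_abs, abs_of_pos hx0])
    have h2 : Summable (fun k : ℕ => ((k + 2 : ℕ) : ℝ) ^ N * x ^ (k + 2)) :=
      h1.comp_injective (add_left_injective 2)
    have h3 := h2.mul_right (x ^ c / x ^ 2)
    refine h3.congr fun k => ?_
    have hx2 : (x : ℝ) ^ 2 ≠ 0 := pow_ne_zero _ hx0.ne'
    push_cast
    field_simp
    ring
  have hbd : ∀ i k : ℕ, ‖F i k‖ ≤ x ^ (k + c) * ((k : ℝ) + 2) ^ N := by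
    intro i k
    simp only [hF]
    split_ifs with h
    · set j : ℕ := i - 1 - k with hj
      have hj1 : 1 ≤ j := by omega
      have hji : j + k + 1 = i := by omega
      have hjpos : (0 : ℝ) < j := by exact_mod_cast hj1
      have hipos : (0 : ℝ) < i := by
        have : 0 < i := by omega
        exact_mod_cast this
      have hjle : (j : ℝ) ≤ i := by exact_mod_cast (by omega : j ≤ i)
      have hr0 : (0 : ℝ) < (j : ℝ) / i := div_pos hjpos hipos
      have hr1 : (j : ℝ) / i ≤ 1 := by rw [div_le_one hipos]; exact hjle
      have hk0 : (0 : ℝ) ≤ k := Nat.cast_nonneg k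
      have hk2 : (1 : ℝ) ≤ (k : ℝ) + 2 := by linarith
      have key : ((j : ℝ) / i) ^ q ≤ ((k : ℝ) + 2) ^ N := by
        rw [← Real.rpow_natCast ((k : ℝ) + 2) N]
        rcases le_or_gt 0 q with hq | hq
        · calc ((j : ℝ) / i) ^ q ≤ 1 := Real.rpow_le_one hr0.le hr1 hq
            _ ≤ ((k : ℝ) + 2) ^ (N : ℝ) := Real.one_le_rpow hk2 (by positivity)
        · have hinv : ((j : ℝ) / i)⁻¹ ≤ (k : ℝ) + 2 := by
            rw [inv_div, div_le_iff₀ hjpos]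
            have hieq : (i : ℝ) = (j : ℝ) + k + 1 := by exact_mod_cast hji.symm
            have hj1' : (1 : ℝ) ≤ j := by exact_mod_cast hj1
            have hkj : (k : ℝ) ≤ (k : ℝ) * j := by
              nlinarith
            rw [hieq]; nlinarith [hkj, hj1']
          have hqN : -q ≤ (N : ℝ) := by
            calc -q ≤ |q| := neg_le_abs q
              _ ≤ (N : ℝ) := Nat.le_ceil _
          calc ((j : ℝ) / i) ^ q = (((j : ℝ) / i)⁻¹) ^ (-q) := by
                rw [Real.inv_rpow hr0.le, Real.rpow_neg hr0.le, inv_inv]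
            _ ≤ ((k : ℝ) + 2) ^ (-q) :=
                Real.rpow_le_rpow (by positivity) hinv (by linarith)
            _ ≤ ((k : ℝ) + 2) ^ (N : ℝ) :=
                Real.rpow_le_rpow_of_exponent_le hk2 hqN
      rw [Real.norm_eq_abs, abs_of_nonneg (by positivity)]
      exact mul_le_mul_of_nonneg_left key (by positivity)
    · rw [norm_zero]; positivity
  have hpt : ∀ k : ℕ, Tendsto (fun i : ℕ => F i k) atTop (𝓝 (x ^ (k + c))) := by
    intro k
    have h1 : Tendsto (fun i : ℕ => 1 - ((k : ℝ) + 1) / i) atTop (𝓝 1) := by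
      have := tendsto_const_div_atTop_nhds_zero_nat ((k : ℝ) + 1)
      have := (tendsto_const_nhds (x := (1 : ℝ)) (f := atTop)).sub this
      simpa using this
    have h2 : Tendsto (fun i : ℕ => (1 - ((k : ℝ) + 1) / i) ^ q) atTop (𝓝 1) := by
      have hc : ContinuousAt (fun y : ℝ => y ^ q) 1 :=
        Real.continuousAt_rpow_const 1 q (Or.inl one_ne_zero)
      have := hc.tendsto.comp h1
      simpa [Function.comp_def] using this
    have h3 := h2.const_mul (x ^ (k + c))
    rw [mul_one] at h3
    refine Tendsto.congr' ?_ h3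
    filter_upwards [eventually_ge_atTop (k + 2)] with i hi
    simp only [hF]
    rw [if_pos (by omega)]
    have hipos : (0 : ℝ) < i := by
      have : 0 < i := by omega
      exact_mod_cast this
    have hcast : ((i - 1 - k : ℕ) : ℝ) = (i : ℝ) - 1 - k := by
      rw [Nat.cast_sub (by omega : k ≤ i - 1), Nat.cast_sub (by omega : 1 ≤ i)]
      push_cast; ring
    have hbase : ((i : ℝ) - 1 - k) / i = 1 - ((k : ℝ) + 1) / i := by
      field_simp; ring
    rw [hcast, hbase]
  have hlim := tendsto_tsum_of_dominated_convergence hbound_summable hpt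
    (Eventually.of_forall hbd)
  have htsum : ∑' k : ℕ, x ^ (k + c) = x ^ c / (1 - x) := by
    have heq : (fun k : ℕ => x ^ (k + c)) = fun k : ℕ => x ^ c * x ^ k := by
      funext k; rw [pow_add]; ring
    rw [heq, tsum_mul_left, tsum_geometric_of_lt_one hx0.le hx1, div_eq_mul_inv]
  rw [htsum] at hlim
  exact hlim.congr fun i => (hsum_eq i).symm

lemma aux_rewrite (D : ℝ) (hD0 : 0 < D) (p : ℝ) (i : ℕ) (hi : 1 ≤ i) (c : ℕ) (hc : c ≤ 1)
    (f : ℕ → ℕ → ℕ) (hf : ∀ j, 1 ≤ j → j ≤ i - 1 → f i j = i - j - 1 + c) :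
    (i : ℝ) ^ 2 * ((i : ℝ) ^ (-p) *
        ∑ j ∈ Finset.Icc 1 (i - 1), D ^ (2 * f i j) * (j : ℝ) ^ (p - 2))
      = ∑ j ∈ Finset.Icc 1 (i - 1),
          (D ^ 2) ^ (i - j - 1 + c) * ((j : ℝ) / i) ^ (p - 2) := by
  rw [Finset.mul_sum, Finset.mul_sum]
  refine Finset.sum_congr rfl fun j hj => ?_
  simp only [Finset.mem_Icc] at hj
  have hipos : (0 : ℝ) < i := by exact_mod_cast (by omega : 0 < i)
  rw [hf j hj.1 hj.2, pow_mul]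
  rw [Real.div_rpow (Nat.cast_nonneg j) (Nat.cast_nonneg i)]
  have hpow : ((i : ℝ) ^ (2 : ℕ)) * (i : ℝ) ^ (-p) = ((i : ℝ) ^ (p - 2))⁻¹ := by
    rw [← Real.rpow_natCast (i : ℝ) 2, ← Real.rpow_add hipos, ← Real.rpow_neg hipos.le]
    norm_num [sub_eq_add_neg]
  rw [div_eq_mul_inv, ← hpow]
  ring

theorem diffusion_consensus_mode_comparison (D lam mu : ℝ)
    (hD0 : 0 < D) (hD1 : D < 1) (hlam : 0 < lam) (hmu : 0 < mu)
    (h2 : 1 < 2 * lam * mu) :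
    (limsup (fun i : ℕ => (i : ℝ) ^ 2 * ((i : ℝ) ^ (-(2 * lam * mu)) *
        ∑ j ∈ Finset.Icc 1 (i - 1),
          D ^ (2 * (i - j)) * (j : ℝ) ^ (2 * lam * mu - 2))) atTop
      ≤ 1 / Real.log (D⁻¹ ^ 2)) ∧
    (1 / Real.log (D⁻¹ ^ 2) ≤
      liminf (fun i : ℕ => (i : ℝ) ^ 2 * ((i : ℝ) ^ (-(2 * lam * mu / D)) *
        ∑ j ∈ Finset.Icc 1 (i - 1),
          D ^ (2 * (i - j - 1)) * (j : ℝ) ^ (2 * lam * mu / D - 2))) atTop) := by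
  set x : ℝ := D ^ 2 with hx
  have hx0 : 0 < x := by positivity
  have hx1 : x < 1 := by nlinarith
  have hx1' : 0 < 1 - x := by linarith
  have hL : Real.log (D⁻¹ ^ 2) = -Real.log x := by
    rw [hx, Real.log_pow, Real.log_pow, Real.log_inv]; ring
  have hlogpos : 0 < -Real.log x := by
    have := Real.log_neg hx0 hx1; linarith
  -- the two elementary log inequalities
  have hub : x / (1 - x) ≤ 1 / (-Real.log x) := by
    rw [div_le_div_iff₀ hx1' hlogpos]
    have h := Real.log_le_sub_one_of_pos (inv_pos.2 hx0)
    rw [Real.log_inv] at h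
    have : -Real.log x ≤ (1 - x) / x := by
      rw [show (1 - x) / x = x⁻¹ - 1 from by field_simp]; exact h
    calc x * -Real.log x ≤ x * ((1 - x) / x) :=
        mul_le_mul_of_nonneg_left this hx0.le
      _ = 1 * (1 - x) := by field_simp
  have hlb : 1 / (-Real.log x) ≤ 1 / (1 - x) := by
    have h := Real.log_le_sub_one_of_pos hx0
    apply one_div_le_one_div_of_le hx1'
    linarith
  constructor
  · have h1 := aux_tendsto x hx0 hx1 (2 * lam * mu - 2) 1
    have hE : (fun i : ℕ => (i : ℝ) ^ 2 * ((i : ℝ) ^ (-(2 * lam * mu)) *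
        ∑ j ∈ Finset.Icc 1 (i - 1),
          D ^ (2 * (i - j)) * (j : ℝ) ^ (2 * lam * mu - 2))) =ᶠ[atTop]
        (fun i : ℕ => ∑ j ∈ Finset.Icc 1 (i - 1),
          x ^ (i - j - 1 + 1) * ((j : ℝ) / i) ^ (2 * lam * mu - 2)) := by
      filter_upwards [eventually_ge_atTop 1] with i hi
      exact aux_rewrite D hD0 (2 * lam * mu) i hi 1 le_rfl (fun i j => i - j)
        (fun j hj1 hj2 => by show i - j = i - j - 1 + 1; omega)
    rw [limsup_congr hE, h1.limsup_eq, hL, pow_one]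
    exact hub
  · have h1 := aux_tendsto x hx0 hx1 (2 * lam * mu / D - 2) 0
    have hE : (fun i : ℕ => (i : ℝ) ^ 2 * ((i : ℝ) ^ (-(2 * lam * mu / D)) *
        ∑ j ∈ Finset.Icc 1 (i - 1),
          D ^ (2 * (i - j - 1)) * (j : ℝ) ^ (2 * lam * mu / D - 2))) =ᶠ[atTop]
        (fun i : ℕ => ∑ j ∈ Finset.Icc 1 (i - 1),
          x ^ (i - j - 1 + 0) * ((j : ℝ) / i) ^ (2 * lam * mu / D - 2)) := by
      filter_upwards [eventually_ge_atTop 1] with i hi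
      exact aux_rewrite D hD0 (2 * lam * mu / D) i hi 0 (by omega) (fun i j => i - j - 1)
        (fun j hj1 hj2 => by show i - j - 1 = i - j - 1 + 0; omega)
    rw [liminf_congr hE, h1.liminf_eq, hL, pow_zero]
    exact hlb
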